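/- Let H and K be real separable Hilbert spaces, m ≥ 0, and let G satisfy Assumption (G') with U = H, Z = K. Suppose F_0 : H × ℝ × K → ℝ is (a) sequentially continuous when K is endowed with its weak topology, (b) Lipschitz in the last two variables uniformly in the first: |F_0(x,y₁,z₁) − F_0(x,y₂,z₂)| ≤ L(|y₁−y₂| + |z₁−z₂|_K) for some L > 0, and (c) of polynomial growth: |F_0(x,y,z)| ≤ L'(1+|x|^m+|y|+|z|_K) for some L' > 0. Suppose (P_s)_{s≥0} is a one-parameter semigroup of continuous linear operators on C_m(H) such that: (d) (s,x) ↦ P_s[φ](x) is Borel measurable on [0,∞)×H for every φ ∈ C_m(H); (e) there exist C > 0 and a ∈ ℝ with |P_s[φ](x)| ≤ C e^{as}|φ|_{C_m}(1+|x|^m) for all s ≥ 0, x ∈ H, φ ∈ C_m(H); (f) P_s(C_m(H)) ⊆ G^{1,G}_m(H) for every s > 0; (g) (s,x) ↦ ∇^G P_s[φ](x) is measurable on (0,∞)×H for every φ ∈ C_m(H); (h) there exist a_G ∈ ℝ and a function γ_G : (0,∞) → [0,∞), locally integrable on [0,∞) and bounded in a neighborhood of +∞, with |∇^G P_s[φ](x)|_K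 ≤ γ_G(s)e^{a_G s}|φ|_{C_m}(1+|x|^m) for all s > 0, x ∈ H, φ ∈ C_m(H). Then there exists λ₀ ∈ ℝ such that for every λ > λ₀ there exists a unique v ∈ G^{1,G}_m(H) satisfying v(x) = ∫_0^∞ e^{−λs} P_s[F_0(·, v(·), ∇^G v(·))](x) ds for every x ∈ H. -/

import Mathlib

open Filter MeasureTheory Set
open scoped RealInnerProductSpace ENNReal

/-- A family `x ↦ G(x)` of closed densely defined (possibly unbounded) linear operators
from `K` to `H` with common domain and range, and minimal-norm pseudoinverses. -/
structure GFamily (K H : Type*)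
    [NormedAddCommGroup K] [InnerProductSpace ℝ K]
    [NormedAddCommGroup H] [InnerProductSpace ℝ H] where
  /-- the common domain `D_G ⊆ K` -/
  dom : Submodule ℝ K
  /-- the operator `G(x) : D_G → H` -/
  op : H → dom →ₗ[ℝ] H
  dense_dom : Dense (dom : Set K)
  closed_graph : ∀ x : H, IsClosed {p : K × H | ∃ h : p.1 ∈ dom, op x ⟨p.1, h⟩ = p.2}
  /-- the common range `R_G ⊆ H` -/
  ran : Set H
  range_eq : ∀ x : H, Set.range (op x) = ran
  /-- the pseudoinverse `G(x)⁻¹ : R_G → D_G` (junk values off `R_G`) -/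
  pinv : H → H → K
  pinv_mem_dom : ∀ x : H, ∀ y ∈ ran, pinv x y ∈ dom
  pinv_apply : ∀ (x : H) (y : H) (hy : y ∈ ran), op x ⟨pinv x y, pinv_mem_dom x y hy⟩ = y
  pinv_minimal : ∀ x : H, ∀ y ∈ ran, ∀ z : dom, op x z = y → ‖pinv x y‖ ≤ ‖(z : K)‖

/-- Assumption (G'): for every `y ∈ R_G`, the map `x ↦ G(x)⁻¹ y` is continuous. -/
def GFamily.ContinuousPinv {K H : Type*}
    [NormedAddCommGroup K] [InnerProductSpace ℝ K]
    [NormedAddCommGroup H] [InnerProductSpace ℝ H] (G : GFamily K H) : Prop :=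
  ∀ y ∈ G.ran, Continuous fun x : H => G.pinv x y

variable {K H : Type*}
    [NormedAddCommGroup K] [InnerProductSpace ℝ K]
    [NormedAddCommGroup H] [InnerProductSpace ℝ H]

/-- `f : H → ℝ` is `G`-Gateaux differentiable at `x` with `G`-gradient `p ∈ K`
(the derivative identified with an element of `K` via Riesz):
for every `z ∈ D_G`, `(f(x + s G(x) z) − f(x))/s → ⟪p, z⟫` as `s → 0`. -/
def HasGGradientAt (G : GFamily K H) (f : H → ℝ) (p : K) (x : H) : Prop :=
  ∀ z : G.dom, Tendsto (fun s : ℝ => s⁻¹ * (f (x + s • G.op x z) - f x))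
    (nhdsWithin (0 : ℝ) {0}ᶜ) (nhds ⟪p, (z : K)⟫)

/-- `f : H → ℝ` is `G`-Fréchet differentiable at `x` with `G`-gradient `p ∈ K`:
`G`-Gateaux differentiable with the limit uniform for `z` in the unit ball of `K`
intersected with `D_G`. -/
def HasGFrechetGradientAt (G : GFamily K H) (f : H → ℝ) (p : K) (x : H) : Prop :=
  HasGGradientAt G f p x ∧
  ∀ ε : ℝ, 0 < ε → ∃ δ : ℝ, 0 < δ ∧ ∀ s : ℝ, s ≠ 0 → |s| < δ →
    ∀ z : G.dom, ‖(z : K)‖ ≤ 1 →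
      |s⁻¹ * (f (x + s • G.op x z) - f x) - ⟪p, (z : K)⟫| ≤ ε

/-- `φ ∈ C_m(H)`. -/
def MemCm (m : ℝ) (φ : H → ℝ) : Prop :=
  Continuous φ ∧ ∃ C : ℝ, ∀ x : H, |φ x| ≤ C * (1 + ‖x‖ ^ m)

/-- `φ ∈ B_m(H)`. -/
def MemBm {H : Type*} [NormedAddCommGroup H] [MeasurableSpace H]
    (m : ℝ) (φ : H → ℝ) : Prop :=
  Measurable φ ∧ ∃ C : ℝ, ∀ x : H, |φ x| ≤ C * (1 + ‖x‖ ^ m)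

/-- The `C_m`- (or `B_m`-) norm `|φ|_{C_m} = sup_x |φ(x)|/(1+‖x‖^m)`. -/
noncomputable def cmNorm (m : ℝ) (φ : H → ℝ) : ℝ :=
  ⨆ x : H, |φ x| / (1 + ‖x‖ ^ m)

/-- `f ∈ G^{1,G}_m(H)` with (everywhere defined) `G`-gradient `Df : H → K`:
`f ∈ C_m(H)`, `f` is `G`-Gateaux differentiable on `H`, `∇^G f` is strongly continuous
and has at most polynomial growth of order `m`. -/
def MemG1Gm (G : GFamily K H) (m : ℝ) (f : H → ℝ) (Df : H → K) : Prop :=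
  MemCm m f ∧ (∀ x : H, HasGGradientAt G f (Df x) x) ∧
  (∀ k : K, Continuous fun x : H => ⟪Df x, k⟫) ∧
  ∃ C : ℝ, ∀ x : H, ‖Df x‖ ≤ C * (1 + ‖x‖ ^ m)

/-- `f ∈ C^{1,G}_m(H)` with (everywhere defined) `G`-gradient `Df : H → K`:
`f ∈ C_m(H)`, `f` is `G`-Fréchet differentiable on `H`, `D^G f` is continuous
and has at most polynomial growth of order `m`. -/
def MemC1Gm (G : GFamily K H) (m : ℝ) (f : H → ℝ) (Df : H → K) : Prop :=
  MemCm m f ∧ (∀ x : H, HasGFrechetGradientAt G f (Df x) x) ∧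
  Continuous Df ∧ ∃ C : ℝ, ∀ x : H, ‖Df x‖ ≤ C * (1 + ‖x‖ ^ m)

section Helpers
set_option linter.unusedSectionVars false

lemma wt_pos (m : ℝ) (x : H) : (0:ℝ) < 1 + ‖x‖ ^ m := by
  have : (0:ℝ) ≤ ‖x‖ ^ m := Real.rpow_nonneg (norm_nonneg x) m
  linarith

lemma bd_nonneg {m : ℝ} {φ : H → ℝ} {N : ℝ} (h : ∀ x, |φ x| ≤ N * (1 + ‖x‖ ^ m)) :
    0 ≤ N := by
  have h0 := h 0
  nlinarith [abs_nonneg (φ 0), wt_pos m (0:H)]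

lemma cmNorm_le {m : ℝ} {φ : H → ℝ} {N : ℝ} (h : ∀ x, |φ x| ≤ N * (1 + ‖x‖ ^ m)) :
    cmNorm m φ ≤ N := by
  refine Real.iSup_le (fun x => ?_) (bd_nonneg h)
  rw [div_le_iff₀ (wt_pos m x)]
  exact h x

lemma le_cmNorm {m : ℝ} {φ : H → ℝ} (h : ∃ C, ∀ x, |φ x| ≤ C * (1 + ‖x‖ ^ m)) (x : H) :
    |φ x| ≤ cmNorm m φ * (1 + ‖x‖ ^ m) := by
  obtain ⟨C, hC⟩ := h
  have hb : BddAbove (Set.range fun x : H => |φ x| / (1 + ‖x‖ ^ m)) := by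
    refine ⟨C, ?_⟩
    rintro r ⟨y, rfl⟩
    rw [div_le_iff₀ (wt_pos m y)]
    exact hC y
  have := le_ciSup hb x
  rw [div_le_iff₀ (wt_pos m x)] at this
  exact this

lemma tendsto_quot_hasDerivAt {g : ℝ → ℝ} {d t : ℝ}
    (h : Tendsto (fun s => s⁻¹ * (g (t + s) - g t)) (nhdsWithin (0:ℝ) {0}ᶜ) (nhds d)) :
    HasDerivAt g d t := by
  rw [hasDerivAt_iff_tendsto_slope]
  have h1 : Tendsto (fun u : ℝ => u - t) (nhdsWithin t {t}ᶜ) (nhdsWithin 0 {0}ᶜ) := by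
    apply tendsto_nhdsWithin_of_tendsto_nhds_of_eventually_within
    · have : Tendsto (fun u : ℝ => u - t) (nhds t) (nhds (t - t)) :=
        (continuous_id.sub continuous_const).tendsto t
      rw [sub_self] at this
      exact this.mono_left nhdsWithin_le_nhds
    · filter_upwards [self_mem_nhdsWithin] with u hu
      exact sub_ne_zero.mpr hu
  have h2 := h.comp h1
  convert h2 using 1
  funext u
  simp only [Function.comp, slope_def_field]
  rw [add_sub_cancel]
  ring

lemma gGrad_unique {G : GFamily K H} {f : H → ℝ} {p q : K} {x : H}
    (hp : HasGGradientAt G f p x) (hq : HasGGradientAt G f q x) : p = q := by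
  have hz : ∀ z : G.dom, ⟪p, (z : K)⟫ = ⟪q, (z : K)⟫ :=
    fun z => tendsto_nhds_unique (hp z) (hq z)
  have hcl : ∀ k : K, ⟪p, k⟫ = ⟪q, k⟫ := by
    have hset : (G.dom : Set K) ⊆ {k : K | ⟪p, k⟫ = ⟪q, k⟫} := fun k hk => hz ⟨k, hk⟩
    have hclosed : IsClosed {k : K | ⟪p, k⟫ = ⟪q, k⟫} :=
      isClosed_eq (Continuous.inner continuous_const continuous_id)
        (Continuous.inner continuous_const continuous_id)
    intro k
    exact (closure_minimal hset hclosed) (G.dense_dom k)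
  have : ∀ k : K, ⟪p - q, k⟫ = 0 := by
    intro k; rw [inner_sub_left, hcl k, sub_self]
  have h0 := this (p - q)
  rw [inner_self_eq_zero] at h0
  exact sub_eq_zero.mp h0

lemma gGrad_add {G : GFamily K H} {f g : H → ℝ} {pf pg : K} {x : H}
    (hf : HasGGradientAt G f pf x) (hg : HasGGradientAt G g pg x) :
    HasGGradientAt G (fun y => f y + g y) (pf + pg) x := by
  intro z
  have := (hf z).add (hg z)
  rw [← inner_add_left] at this
  convert this using 2 with s
  ring

end Helpers


set_option maxHeartbeats 2000000

/-- existence and uniqueness of the mild solution in `G^{1,G}_m(H)` of the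
semilinear elliptic equation, for `λ` large enough, under Assumption (G'), sequential
weak continuity, uniform Lipschitzianity and polynomial growth of the Hamiltonian `F₀`,
and the `G`-smoothing assumptions on the transition semigroup `(P_s)` on `C_m(H)`. -/
theorem stmt6 {H K : Type*}
    [NormedAddCommGroup H] [InnerProductSpace ℝ H] [CompleteSpace H]
    [TopologicalSpace.SeparableSpace H] [MeasurableSpace H] [BorelSpace H]
    [NormedAddCommGroup K] [InnerProductSpace ℝ K] [CompleteSpace K]
    [TopologicalSpace.SeparableSpace K] [MeasurableSpace K] [BorelSpace K]
    (m : ℝ) (hm : 0 ≤ m)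
    (G : GFamily K H) (hG : G.ContinuousPinv)
    (F₀ : H → ℝ → K → ℝ)
    -- (a) sequential continuity with the weak topology on K
    (hF₀cont : ∀ (xs : ℕ → H) (ys : ℕ → ℝ) (zs : ℕ → K) (x : H) (y : ℝ) (z : K),
      Tendsto xs atTop (nhds x) → Tendsto ys atTop (nhds y) →
      (∀ k : K, Tendsto (fun n => ⟪zs n, k⟫) atTop (nhds ⟪z, k⟫)) →
      Tendsto (fun n => F₀ (xs n) (ys n) (zs n)) atTop (nhds (F₀ x y z)))
    -- (b) uniform Lipschitz continuity in the last two variables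
    (L : ℝ) (hL : 0 < L)
    (hF₀lip : ∀ (x : H) (y₁ y₂ : ℝ) (z₁ z₂ : K),
      |F₀ x y₁ z₁ - F₀ x y₂ z₂| ≤ L * (|y₁ - y₂| + ‖z₁ - z₂‖))
    -- (c) polynomial growth
    (L' : ℝ) (hL' : 0 < L')
    (hF₀gr : ∀ (x : H) (y : ℝ) (z : K),
      |F₀ x y z| ≤ L' * (1 + ‖x‖ ^ m + |y| + ‖z‖))
    -- the semigroup P on C_m(H)
    (P : ℝ → (H → ℝ) → H → ℝ)
    (hPmem : ∀ s : ℝ, 0 ≤ s → ∀ φ, MemCm m φ → MemCm m (P s φ))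
    (hPadd : ∀ s : ℝ, 0 ≤ s → ∀ φ ψ, MemCm m φ → MemCm m ψ →
      ∀ x : H, P s (fun y => φ y + ψ y) x = P s φ x + P s ψ x)
    (hPsmul : ∀ s : ℝ, 0 ≤ s → ∀ (c : ℝ) φ, MemCm m φ →
      ∀ x : H, P s (fun y => c * φ y) x = c * P s φ x)
    (hP0 : ∀ φ, MemCm m φ → P 0 φ = φ)
    (hPsg : ∀ s t : ℝ, 0 ≤ s → 0 ≤ t → ∀ φ, MemCm m φ → P (t + s) φ = P t (P s φ))
    -- (d) joint measurability on [0,∞) × H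
    (hPmeas : ∀ φ, MemCm m φ → Measurable fun p : Ici (0 : ℝ) × H => P p.1 φ p.2)
    -- (e) growth estimate
    (C : ℝ) (hC : 0 < C) (a : ℝ)
    (hPbd : ∀ s : ℝ, 0 ≤ s → ∀ φ, MemCm m φ → ∀ x : H,
      |P s φ x| ≤ C * Real.exp (a * s) * cmNorm m φ * (1 + ‖x‖ ^ m))
    -- (f) G-smoothing: P_s maps C_m(H) into G^{1,G}_m(H), with G-gradient DP s φ
    (DP : ℝ → (H → ℝ) → H → K)
    (hPsmooth : ∀ s : ℝ, 0 < s → ∀ φ, MemCm m φ → MemG1Gm G m (P s φ) (DP s φ))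
    -- (g) measurability of the G-gradient on (0,∞) × H
    (hDPmeas : ∀ φ, MemCm m φ → Measurable fun p : Ioi (0 : ℝ) × H => DP p.1 φ p.2)
    -- (h) gradient estimate with γ_G locally integrable and bounded near +∞
    (γG : ℝ → ℝ) (hγGpos : ∀ s : ℝ, 0 ≤ γG s)
    (hγGloc : ∀ T : ℝ, IntegrableOn γG (Icc 0 T))
    (hγGbdd : ∃ R Mb : ℝ, ∀ s : ℝ, R ≤ s → γG s ≤ Mb)
    (aG : ℝ)
    (hDPbd : ∀ s : ℝ, 0 < s → ∀ φ, MemCm m φ → ∀ x : H,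
      ‖DP s φ x‖ ≤ γG s * Real.exp (aG * s) * cmNorm m φ * (1 + ‖x‖ ^ m)) :
    -- conclusion: for λ large there is a unique mild solution in G^{1,G}_m(H)
    ∃ lam₀ : ℝ, ∀ lam : ℝ, lam₀ < lam →
      ∃ (v : H → ℝ) (Dv : H → K),
        (MemG1Gm G m v Dv ∧
          ∀ x : H, v x = ∫ s in Ici (0 : ℝ),
            Real.exp (-lam * s) * P s (fun y => F₀ y (v y) (Dv y)) x) ∧
        ∀ (v' : H → ℝ) (Dv' : H → K),
          (MemG1Gm G m v' Dv' ∧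
            ∀ x : H, v' x = ∫ s in Ici (0 : ℝ),
              Real.exp (-lam * s) * P s (fun y => F₀ y (v' y) (Dv' y)) x) →
          v' = v := by
  classical
  haveI : SecondCountableTopology K := UniformSpace.secondCountable_of_separable K
  -- measurability of γG on (0,∞)
  have mγ : AEStronglyMeasurable γG (volume.restrict (Ioi (0:ℝ))) := by
    have hU : Ioi (0:ℝ) = ⋃ n : ℕ, Ioc (0:ℝ) (n+1) := by
      ext s
      simp only [mem_Ioi, mem_iUnion, mem_Ioc]
      constructor
      · intro hs
        obtain ⟨n, hn⟩ := exists_nat_ge s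
        exact ⟨n, hs, hn.trans (by linarith)⟩
      · rintro ⟨n, hn, -⟩
        exact hn
    rw [hU]
    rw [aestronglyMeasurable_iUnion_iff]
    intro n
    exact (hγGloc (n+1)).aestronglyMeasurable.mono_measure
      (Measure.restrict_mono Ioc_subset_Icc_self le_rfl)
  -- integrability of exponentials
  have intexp : ∀ c lam : ℝ, c < lam →
      IntegrableOn (fun s => Real.exp ((c - lam) * s)) (Ioi (0:ℝ)) := by
    intro c lam h
    have := exp_neg_integrableOn_Ioi (0:ℝ) (sub_pos.mpr h)
    refine this.congr_fun (fun s _ => ?_) measurableSet_Ioi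
    ring_nf
  have intγ : ∀ lam : ℝ, aG < lam →
      IntegrableOn (fun s => γG s * Real.exp ((aG - lam) * s)) (Ioi (0:ℝ)) := by
    intro lam h
    obtain ⟨R, Mb, hRMb⟩ := hγGbdd
    set R' := max R 0 with hR'
    set Mb' := max Mb 0 with hMb'
    have hR0 : (0:ℝ) ≤ R' := le_max_right R 0
    have hbd : ∀ s, R' ≤ s → γG s ≤ Mb' :=
      fun s hs => (hRMb s ((le_max_left R 0).trans hs)).trans (le_max_left Mb 0)
    have hmeas : AEStronglyMeasurable (fun s => γG s * Real.exp ((aG - lam) * s))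
        (volume.restrict (Ioi (0:ℝ))) :=
      mγ.mul (Real.continuous_exp.comp (continuous_const.mul continuous_id)).aestronglyMeasurable
    rw [← Ioc_union_Ioi_eq_Ioi hR0]
    refine IntegrableOn.union ?_ ?_
    · refine Integrable.mono' ((hγGloc R').mono_set Ioc_subset_Icc_self)
        (hmeas.mono_measure (Measure.restrict_mono Ioc_subset_Ioi_self le_rfl)) ?_
      filter_upwards [ae_restrict_mem measurableSet_Ioc] with s hs
      rw [Real.norm_eq_abs, abs_mul, abs_of_nonneg (hγGpos s), abs_of_nonneg (Real.exp_nonneg _)]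
      have : Real.exp ((aG - lam) * s) ≤ 1 := by
        rw [← Real.exp_zero]
        apply Real.exp_le_exp.mpr
        nlinarith [hs.1]
      nlinarith [hγGpos s, Real.exp_nonneg ((aG - lam) * s)]
    · have hint : IntegrableOn (fun s => Mb' * Real.exp (-(lam - aG) * s)) (Ioi R') :=
        (exp_neg_integrableOn_Ioi R' (sub_pos.mpr h)).const_mul Mb'
      refine Integrable.mono' hint
        (hmeas.mono_measure (Measure.restrict_mono (Ioi_subset_Ioi hR0) le_rfl)) ?_
      filter_upwards [ae_restrict_mem measurableSet_Ioi] with s hs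
      rw [Real.norm_eq_abs, abs_mul, abs_of_nonneg (hγGpos s), abs_of_nonneg (Real.exp_nonneg _)]
      have he : (aG - lam) * s = -(lam - aG) * s := by ring
      rw [he]
      exact mul_le_mul_of_nonneg_right (hbd s hs.le) (Real.exp_nonneg _)
  -- the master integral
  set b : ℝ := max a aG with hb
  set I : ℝ → ℝ := fun l => ∫ s in Ioi (0:ℝ),
      (C * Real.exp ((a - l) * s) + γG s * Real.exp ((aG - l) * s)) with hI
  have intI : ∀ l : ℝ, b < l → IntegrableOn
      (fun s => C * Real.exp ((a - l) * s) + γG s * Real.exp ((aG - l) * s)) (Ioi (0:ℝ)) := by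
    intro l hl
    exact ((intexp a l ((le_max_left a aG).trans_lt hl)).const_mul C).add
      (intγ l ((le_max_right a aG).trans_lt hl))
  have I_nonneg : ∀ l : ℝ, 0 ≤ I l := by
    intro l
    apply setIntegral_nonneg measurableSet_Ioi
    intro s _
    have := hγGpos s
    positivity
  have I_anti : ∀ l l' : ℝ, b < l → l ≤ l' → I l' ≤ I l := by
    intro l l' hl hll'
    apply setIntegral_mono_on (intI l' (hl.trans_le hll')) (intI l hl) measurableSet_Ioi
    intro s hs
    have h1 : Real.exp ((a - l') * s) ≤ Real.exp ((a - l) * s) :=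
      Real.exp_le_exp.mpr (by nlinarith [hs.out])
    have h2 : Real.exp ((aG - l') * s) ≤ Real.exp ((aG - l) * s) :=
      Real.exp_le_exp.mpr (by nlinarith [hs.out])
    have := hγGpos s
    nlinarith
  have htend : Tendsto (fun n : ℕ => I (b + 1 + n)) atTop (nhds 0) := by
    have h0 : (0:ℝ) = ∫ s in Ioi (0:ℝ), (0:ℝ) := by simp
    rw [h0]
    apply tendsto_integral_of_dominated_convergence
      (fun s => C * Real.exp ((a - (b+1)) * s) + γG s * Real.exp ((aG - (b+1)) * s))
    · intro n
      exact (intI (b + 1 + n) (by linarith [Nat.cast_nonneg (α := ℝ) n])).aestronglyMeasurable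
    · exact intI (b+1) (by linarith)
    · intro n
      filter_upwards [ae_restrict_mem measurableSet_Ioi] with s hs
      have hs0 : (0:ℝ) < s := hs
      have h1 : Real.exp ((a - (b+1+n)) * s) ≤ Real.exp ((a - (b+1)) * s) :=
        Real.exp_le_exp.mpr (by nlinarith [Nat.cast_nonneg (α := ℝ) n])
      have h2 : Real.exp ((aG - (b+1+n)) * s) ≤ Real.exp ((aG - (b+1)) * s) :=
        Real.exp_le_exp.mpr (by nlinarith [Nat.cast_nonneg (α := ℝ) n])
      rw [Real.norm_eq_abs, abs_of_nonneg (add_nonneg (by positivity)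
        (mul_nonneg (hγGpos s) (Real.exp_nonneg _)))]
      nlinarith [hγGpos s, Real.exp_nonneg ((a - (b+1+n)) * s),
        Real.exp_nonneg ((aG - (b+1+n)) * s)]
    · filter_upwards [ae_restrict_mem measurableSet_Ioi] with s hs
      have hs0 : (0:ℝ) < s := hs
      have key : ∀ n : ℕ, C * Real.exp ((a - (b+1+n)) * s) + γG s * Real.exp ((aG - (b+1+n)) * s)
          = (C * Real.exp ((a - (b+1)) * s) + γG s * Real.exp ((aG - (b+1)) * s))
            * Real.exp (-s) ^ n := by
        intro n
        rw [← Real.exp_nat_mul]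
        rw [add_mul, mul_assoc, mul_assoc, ← Real.exp_add, ← Real.exp_add]
        ring_nf
      simp_rw [key]
      have hlt : Real.exp (-s) < 1 := Real.exp_lt_one_iff.mpr (by linarith)
      have := tendsto_pow_atTop_nhds_zero_of_lt_one (Real.exp_nonneg (-s)) hlt
      have h2 := this.const_mul (C * Real.exp ((a - (b+1)) * s) + γG s * Real.exp ((aG - (b+1)) * s))
      rw [mul_zero] at h2
      exact h2
  -- choose lam₀
  have heps : (0:ℝ) < (4*(L+1))⁻¹ := by positivity
  have hev := htend.eventually (eventually_lt_nhds heps)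
  obtain ⟨n₀, hn₀⟩ := hev.exists
  refine ⟨b + 1 + n₀, fun lam hlam => ?_⟩
  have hblam : b + 1 + (n₀:ℝ) ≤ lam := hlam.le
  have hn0 : (0:ℝ) ≤ (n₀:ℝ) := Nat.cast_nonneg n₀
  have hblt : b < lam := by linarith
  have ha : a < lam := (le_max_left a aG).trans_lt hblt
  have haG : aG < lam := (le_max_right a aG).trans_lt hblt
  have hIlam : I lam ≤ (4*(L+1))⁻¹ :=
    (I_anti (b+1+n₀) lam (by linarith) hblam).trans hn₀.le
  have hκ : L * I lam ≤ 1/2 := by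
    have h1 : L * I lam ≤ L * (4*(L+1))⁻¹ := by
      apply mul_le_mul_of_nonneg_left hIlam hL.le
    have h2 : L * (4*(L+1))⁻¹ ≤ 1/2 := by
      rw [mul_inv_le_iff₀ (by positivity)]
      nlinarith
    linarith
  -- measurability of slices
  have measP : ∀ φ : H → ℝ, MemCm m φ → ∀ x : H,
      AEStronglyMeasurable (fun s : ℝ => P s φ x) (volume.restrict (Ioi (0:ℝ))) := by
    intro φ hφ x
    have h1 : Measurable fun s : Ici (0:ℝ) => P (s:ℝ) φ x :=
      (hPmeas φ hφ).comp (measurable_id.prodMk measurable_const)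
    have h2 : Measurable fun s : ℝ =>
        if h : s ∈ Ici (0:ℝ) then P (s:ℝ) φ x else (0:ℝ) :=
      Measurable.dite h1 measurable_const measurableSet_Ici
    refine h2.aestronglyMeasurable.congr ?_
    filter_upwards [ae_restrict_mem measurableSet_Ioi] with s hs
    simp [le_of_lt (show (0:ℝ) < s from hs)]
  have measDP : ∀ φ : H → ℝ, MemCm m φ → ∀ x : H,
      AEStronglyMeasurable (fun s : ℝ => DP s φ x) (volume.restrict (Ioi (0:ℝ))) := by
    intro φ hφ x
    have h1 : Measurable fun s : Ioi (0:ℝ) => DP (s:ℝ) φ x :=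
      (hDPmeas φ hφ).comp (measurable_id.prodMk measurable_const)
    have h2 : Measurable fun s : ℝ =>
        if h : s ∈ Ioi (0:ℝ) then DP (s:ℝ) φ x else (0:K) :=
      Measurable.dite h1 measurable_const measurableSet_Ioi
    refine h2.aestronglyMeasurable.congr ?_
    filter_upwards [ae_restrict_mem measurableSet_Ioi] with s hs
    simp [hs]
  -- pointwise semigroup bounds with explicit constants
  have Pb : ∀ (φ : H → ℝ) (N : ℝ), MemCm m φ → (∀ y, |φ y| ≤ N * (1 + ‖y‖ ^ m)) →
      ∀ s : ℝ, 0 ≤ s → ∀ x : H, |P s φ x| ≤ C * Real.exp (a*s) * N * (1 + ‖x‖ ^ m) := by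
    intro φ N hφ hb s hs x
    have h := hPbd s hs φ hφ x
    have h2 : cmNorm m φ ≤ N := cmNorm_le hb
    have h3 : (0:ℝ) < C * Real.exp (a*s) := by positivity
    refine h.trans ?_
    exact mul_le_mul_of_nonneg_right (mul_le_mul_of_nonneg_left h2 h3.le) (wt_pos m x).le
  have DPb : ∀ (φ : H → ℝ) (N : ℝ), MemCm m φ → (∀ y, |φ y| ≤ N * (1 + ‖y‖ ^ m)) →
      ∀ s : ℝ, 0 < s → ∀ x : H, ‖DP s φ x‖ ≤ γG s * Real.exp (aG*s) * N * (1 + ‖x‖ ^ m) := by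
    intro φ N hφ hb s hs x
    have h := hDPbd s hs φ hφ x
    have h2 : cmNorm m φ ≤ N := cmNorm_le hb
    have h3 : (0:ℝ) ≤ γG s * Real.exp (aG*s) := mul_nonneg (hγGpos s) (Real.exp_nonneg _)
    refine h.trans ?_
    exact mul_le_mul_of_nonneg_right (mul_le_mul_of_nonneg_left h2 h3) (wt_pos m x).le
  -- the two pieces of I lam
  set J1 : ℝ := ∫ s in Ioi (0:ℝ), C * Real.exp ((a - lam) * s) with hJ1
  set J2 : ℝ := ∫ s in Ioi (0:ℝ), γG s * Real.exp ((aG - lam) * s) with hJ2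
  have intJ1 : IntegrableOn (fun s => C * Real.exp ((a - lam) * s)) (Ioi (0:ℝ)) :=
    (intexp a lam ha).const_mul C
  have intJ2 : IntegrableOn (fun s => γG s * Real.exp ((aG - lam) * s)) (Ioi (0:ℝ)) :=
    intγ lam haG
  have hJsum : J1 + J2 = I lam := (integral_add intJ1 intJ2).symm
  have hJ1nn : 0 ≤ J1 := setIntegral_nonneg measurableSet_Ioi (fun s _ => by positivity)
  have hJ2nn : 0 ≤ J2 := setIntegral_nonneg measurableSet_Ioi
    (fun s _ => mul_nonneg (hγGpos s) (Real.exp_nonneg _))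
  -- the integral operators
  set w : (H → ℝ) → H → ℝ := fun φ x => ∫ s in Ioi (0:ℝ), Real.exp (-lam*s) * P s φ x with hw
  set Dw : (H → ℝ) → H → K := fun φ x => ∫ s in Ioi (0:ℝ), Real.exp (-lam*s) • DP s φ x with hDw
  -- integrability
  have intw : ∀ (φ : H → ℝ) (N : ℝ), MemCm m φ → (∀ y, |φ y| ≤ N * (1 + ‖y‖ ^ m)) → ∀ x : H,
      IntegrableOn (fun s => Real.exp (-lam*s) * P s φ x) (Ioi (0:ℝ)) ∧
      (∀ᵐ s ∂(volume.restrict (Ioi (0:ℝ))),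
        ‖Real.exp (-lam*s) * P s φ x‖ ≤ C * Real.exp ((a - lam) * s) * (N * (1 + ‖x‖ ^ m))) := by
    intro φ N hφ hb x
    have hae : ∀ᵐ s ∂(volume.restrict (Ioi (0:ℝ))),
        ‖Real.exp (-lam*s) * P s φ x‖ ≤ C * Real.exp ((a - lam) * s) * (N * (1 + ‖x‖ ^ m)) := by
      filter_upwards [ae_restrict_mem measurableSet_Ioi] with s hs
      have hs0 : (0:ℝ) ≤ s := le_of_lt hs
      have h1 := Pb φ N hφ hb s hs0 x
      rw [Real.norm_eq_abs, abs_mul, abs_of_nonneg (Real.exp_nonneg _)]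
      have he : Real.exp (-lam*s) * (C * Real.exp (a*s)) = C * Real.exp ((a - lam) * s) := by
        rw [mul_comm, mul_assoc, ← Real.exp_add]
        ring_nf
      calc Real.exp (-lam*s) * |P s φ x|
          ≤ Real.exp (-lam*s) * (C * Real.exp (a*s) * N * (1 + ‖x‖ ^ m)) :=
            mul_le_mul_of_nonneg_left h1 (Real.exp_nonneg _)
        _ = C * Real.exp ((a - lam) * s) * (N * (1 + ‖x‖ ^ m)) := by rw [← he]; ring
    refine ⟨Integrable.mono' (intJ1.mul_const (N * (1 + ‖x‖ ^ m))) ?_ hae, hae⟩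
    exact ((Real.continuous_exp.comp (continuous_const.mul continuous_id)).aestronglyMeasurable).mul
      (measP φ hφ x)
  have intDw : ∀ (φ : H → ℝ) (N : ℝ), MemCm m φ → (∀ y, |φ y| ≤ N * (1 + ‖y‖ ^ m)) → ∀ x : H,
      IntegrableOn (fun s => Real.exp (-lam*s) • DP s φ x) (Ioi (0:ℝ)) ∧
      (∀ᵐ s ∂(volume.restrict (Ioi (0:ℝ))),
        ‖Real.exp (-lam*s) • DP s φ x‖ ≤ γG s * Real.exp ((aG - lam) * s) * (N * (1 + ‖x‖ ^ m))) := by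
    intro φ N hφ hb x
    have hae : ∀ᵐ s ∂(volume.restrict (Ioi (0:ℝ))),
        ‖Real.exp (-lam*s) • DP s φ x‖ ≤ γG s * Real.exp ((aG - lam) * s) * (N * (1 + ‖x‖ ^ m)) := by
      filter_upwards [ae_restrict_mem measurableSet_Ioi] with s hs
      have h1 := DPb φ N hφ hb s hs x
      rw [norm_smul, Real.norm_eq_abs, abs_of_nonneg (Real.exp_nonneg _)]
      have he : Real.exp (-lam*s) * (γG s * Real.exp (aG*s)) = γG s * Real.exp ((aG - lam) * s) := by
        rw [mul_comm (γG s), mul_comm (γG s), ← mul_assoc, ← Real.exp_add]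
        ring_nf
      calc Real.exp (-lam*s) * ‖DP s φ x‖
          ≤ Real.exp (-lam*s) * (γG s * Real.exp (aG*s) * N * (1 + ‖x‖ ^ m)) :=
            mul_le_mul_of_nonneg_left h1 (Real.exp_nonneg _)
        _ = γG s * Real.exp ((aG - lam) * s) * (N * (1 + ‖x‖ ^ m)) := by rw [← he]; ring
    refine ⟨Integrable.mono' (intJ2.mul_const (N * (1 + ‖x‖ ^ m))) ?_ hae, hae⟩
    exact AEStronglyMeasurable.smul
      ((Real.continuous_exp.comp (continuous_const.mul continuous_id)).aestronglyMeasurable)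
      (measDP φ hφ x)
  -- weighted bounds on w and Dw
  have wbd : ∀ (φ : H → ℝ) (N : ℝ), MemCm m φ → (∀ y, |φ y| ≤ N * (1 + ‖y‖ ^ m)) → ∀ x : H,
      |w φ x| ≤ J1 * (N * (1 + ‖x‖ ^ m)) ∧ ‖Dw φ x‖ ≤ J2 * (N * (1 + ‖x‖ ^ m)) := by
    intro φ N hφ hb x
    constructor
    · rw [← Real.norm_eq_abs]
      refine (norm_integral_le_of_norm_le (intJ1.mul_const _) (intw φ N hφ hb x).2).trans ?_
      rw [integral_mul_const]
    · refine (norm_integral_le_of_norm_le (intJ2.mul_const _) (intDw φ N hφ hb x).2).trans ?_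
      rw [integral_mul_const]
  -- weight continuity and sequence bounds
  have wtcont : Continuous fun y : H => 1 + ‖y‖ ^ m := by
    refine continuous_const.add ?_
    rw [continuous_iff_continuousAt]
    intro y
    exact (Real.continuousAt_rpow_const _ _ (Or.inr hm)).comp continuous_norm.continuousAt
  have seqB : ∀ (xs : ℕ → H) (x : H), Tendsto xs atTop (nhds x) →
      ∃ B : ℝ, 0 < B ∧ ∀ n, 1 + ‖xs n‖ ^ m ≤ B := by
    intro xs x hxs
    have ht : Tendsto (fun n => 1 + ‖xs n‖ ^ m) atTop (nhds (1 + ‖x‖ ^ m)) :=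
      (wtcont.continuousAt.tendsto).comp hxs
    obtain ⟨B, hB⟩ := ht.bddAbove_range
    refine ⟨max B 1, lt_max_of_lt_right one_pos, fun n => ?_⟩
    exact le_max_of_le_left (hB (Set.mem_range_self n))
  -- continuity of w φ
  have wcont : ∀ (φ : H → ℝ) (N : ℝ), MemCm m φ → (∀ y, |φ y| ≤ N * (1 + ‖y‖ ^ m)) →
      Continuous (w φ) := by
    intro φ N hφ hb
    have hN : 0 ≤ N := bd_nonneg hb
    apply continuous_iff_seqContinuous.mpr
    intro xs x hxs
    obtain ⟨B, hB0, hB⟩ := seqB xs x hxs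
    apply tendsto_integral_of_dominated_convergence
      (fun s => C * Real.exp ((a - lam) * s) * (N * B))
    · intro n
      exact ((Real.continuous_exp.comp
        (continuous_const.mul continuous_id)).aestronglyMeasurable).mul (measP φ hφ (xs n))
    · exact intJ1.mul_const (N * B)
    · intro n
      filter_upwards [(intw φ N hφ hb (xs n)).2] with s hs
      refine hs.trans ?_
      have h1 : N * (1 + ‖xs n‖ ^ m) ≤ N * B := mul_le_mul_of_nonneg_left (hB n) hN
      have h2 : (0:ℝ) ≤ C * Real.exp ((a - lam) * s) := by positivity
      exact mul_le_mul_of_nonneg_left h1 h2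
    · filter_upwards [ae_restrict_mem measurableSet_Ioi] with s hs
      have hc : Continuous (P s φ) := (hPmem s hs.le φ hφ).1
      exact ((hc.continuousAt.tendsto).comp hxs).const_mul _
  -- inner product representation of Dw
  have Dwinner : ∀ (φ : H → ℝ) (N : ℝ), MemCm m φ → (∀ y, |φ y| ≤ N * (1 + ‖y‖ ^ m)) →
      ∀ (x : H) (k : K), ⟪Dw φ x, k⟫ = ∫ s in Ioi (0:ℝ), Real.exp (-lam*s) * ⟪DP s φ x, k⟫ := by
    intro φ N hφ hb x k
    rw [real_inner_comm]
    rw [← integral_inner (intDw φ N hφ hb x).1 k]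
    congr 1
    funext s
    rw [real_inner_smul_right, real_inner_comm]
  -- weak continuity of Dw φ
  have Dwweak : ∀ (φ : H → ℝ) (N : ℝ), MemCm m φ → (∀ y, |φ y| ≤ N * (1 + ‖y‖ ^ m)) →
      ∀ k : K, Continuous fun x => ⟪Dw φ x, k⟫ := by
    intro φ N hφ hb k
    have hN : 0 ≤ N := bd_nonneg hb
    apply continuous_iff_seqContinuous.mpr
    intro xs x hxs
    obtain ⟨B, hB0, hB⟩ := seqB xs x hxs
    simp only [Function.comp, Dwinner φ N hφ hb]
    apply tendsto_integral_of_dominated_convergence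
      (fun s => γG s * Real.exp ((aG - lam) * s) * (N * B * ‖k‖))
    · intro n
      refine AEStronglyMeasurable.mul ((Real.continuous_exp.comp
        (continuous_const.mul continuous_id)).aestronglyMeasurable) ?_
      exact AEStronglyMeasurable.inner (measDP φ hφ (xs n)) aestronglyMeasurable_const
    · exact intJ2.mul_const (N * B * ‖k‖)
    · intro n
      filter_upwards [ae_restrict_mem measurableSet_Ioi] with s hs
      have h1 := DPb φ N hφ hb s hs (xs n)
      have h2 : |⟪DP s φ (xs n), k⟫| ≤ ‖DP s φ (xs n)‖ * ‖k‖ := abs_real_inner_le_norm _ _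
      rw [Real.norm_eq_abs, abs_mul, abs_of_nonneg (Real.exp_nonneg _)]
      have hgnn : (0:ℝ) ≤ γG s * Real.exp (aG * s) := mul_nonneg (hγGpos s) (Real.exp_nonneg _)
      calc Real.exp (-lam*s) * |⟪DP s φ (xs n), k⟫|
          ≤ Real.exp (-lam*s) * (γG s * Real.exp (aG*s) * N * (1 + ‖xs n‖ ^ m) * ‖k‖) := by
            refine mul_le_mul_of_nonneg_left (h2.trans ?_) (Real.exp_nonneg _)
            exact mul_le_mul_of_nonneg_right h1 (norm_nonneg k)
        _ ≤ Real.exp (-lam*s) * (γG s * Real.exp (aG*s) * N * B * ‖k‖) := by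
            refine mul_le_mul_of_nonneg_left ?_ (Real.exp_nonneg _)
            have h4 : γG s * Real.exp (aG*s) * N * (1 + ‖xs n‖ ^ m) ≤ γG s * Real.exp (aG*s) * N * B :=
              mul_le_mul_of_nonneg_left (hB n) (mul_nonneg hgnn hN)
            exact mul_le_mul_of_nonneg_right h4 (norm_nonneg k)
        _ = γG s * Real.exp ((aG - lam) * s) * (N * B * ‖k‖) := by
            have he : Real.exp (-lam*s) * (γG s * Real.exp (aG*s))
                = γG s * Real.exp ((aG - lam) * s) := by
              rw [mul_comm (γG s), mul_comm (γG s), ← mul_assoc, ← Real.exp_add]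
              ring_nf
            rw [← he]; ring
    · filter_upwards [ae_restrict_mem measurableSet_Ioi] with s hs
      have hc : Continuous fun y => ⟪DP s φ y, k⟫ := (hPsmooth s hs φ hφ).2.2.1 k
      exact ((hc.continuousAt.tendsto).comp hxs).const_mul _
  -- subtraction stays in C_m
  have memCm_sub : ∀ φ ψ' : H → ℝ, MemCm m φ → MemCm m ψ' → MemCm m (fun y => φ y - ψ' y) := by
    rintro φ ψ' ⟨hc1, C1, hb1⟩ ⟨hc2, C2, hb2⟩
    refine ⟨hc1.sub hc2, C1 + C2, fun x => ?_⟩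
    calc |φ x - ψ' x| ≤ |φ x| + |ψ' x| := abs_sub _ _
      _ ≤ C1 * (1 + ‖x‖ ^ m) + C2 * (1 + ‖x‖ ^ m) := add_le_add (hb1 x) (hb2 x)
      _ = (C1 + C2) * (1 + ‖x‖ ^ m) := by ring
  -- linearity of P on differences
  have Pdiff : ∀ φ ψ' : H → ℝ, MemCm m φ → MemCm m ψ' → ∀ s : ℝ, 0 ≤ s → ∀ x : H,
      P s φ x - P s ψ' x = P s (fun y => φ y - ψ' y) x := by
    intro φ ψ' hφ hψ' s hs x
    have hδ := memCm_sub φ ψ' hφ hψ'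
    have heq : (fun y => (φ y - ψ' y) + ψ' y) = φ := by funext y; ring
    have h := hPadd s hs (fun y => φ y - ψ' y) ψ' hδ hψ' x
    rw [heq] at h
    linarith
  -- linearity of DP on differences (via uniqueness of the G-gradient)
  have DPdiff : ∀ φ ψ' : H → ℝ, MemCm m φ → MemCm m ψ' → ∀ s : ℝ, 0 < s → ∀ x : H,
      DP s φ x - DP s ψ' x = DP s (fun y => φ y - ψ' y) x := by
    intro φ ψ' hφ hψ' s hs x
    have hδ := memCm_sub φ ψ' hφ hψ'
    have h1 : HasGGradientAt G (P s φ) (DP s φ x) x := (hPsmooth s hs φ hφ).2.1 x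
    have h2 : HasGGradientAt G (P s ψ') (DP s ψ' x) x := (hPsmooth s hs ψ' hψ').2.1 x
    have h3 : HasGGradientAt G (P s fun y => φ y - ψ' y)
        (DP s (fun y => φ y - ψ' y) x) x := (hPsmooth s hs _ hδ).2.1 x
    have h4 : HasGGradientAt G
        (fun y => P s (fun y => φ y - ψ' y) y + P s ψ' y)
        (DP s (fun y => φ y - ψ' y) x + DP s ψ' x) x := gGrad_add h3 h2
    have hfun : (fun y => P s (fun y => φ y - ψ' y) y + P s ψ' y) = P s φ := by
      funext y
      have h := hPadd s hs.le (fun y => φ y - ψ' y) ψ' hδ hψ' y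
      have heq : (fun y => (φ y - ψ' y) + ψ' y) = φ := by funext y'; ring
      rw [heq] at h
      linarith
    rw [hfun] at h4
    have := gGrad_unique h1 h4
    rw [this]
    abel
  -- the nonlinearity
  set ψF : (H → ℝ) → (H → K) → H → ℝ := fun v Dv x => F₀ x (v x) (Dv x) with hψF
  set Adm : (H → ℝ) → (H → K) → Prop := fun v Dv =>
    Continuous v ∧ (∀ k : K, Continuous fun x => ⟪Dv x, k⟫) ∧
    ∃ N, 0 ≤ N ∧ ∀ x, |v x| + ‖Dv x‖ ≤ N * (1 + ‖x‖ ^ m) with hAdm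
  have ψbd : ∀ (v : H → ℝ) (Dv : H → K) (N : ℝ), (∀ x, |v x| + ‖Dv x‖ ≤ N * (1 + ‖x‖ ^ m)) →
      ∀ x, |ψF v Dv x| ≤ L' * (1 + N) * (1 + ‖x‖ ^ m) := by
    intro v Dv N hN x
    have h1 := hF₀gr x (v x) (Dv x)
    have h2 := hN x
    have h3 : (0:ℝ) ≤ ‖x‖ ^ m := Real.rpow_nonneg (norm_nonneg x) m
    have h4 : 1 + ‖x‖ ^ m + |v x| + ‖Dv x‖ ≤ (1 + N) * (1 + ‖x‖ ^ m) := by nlinarith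
    calc |ψF v Dv x| ≤ L' * (1 + ‖x‖ ^ m + |v x| + ‖Dv x‖) := h1
      _ ≤ L' * ((1 + N) * (1 + ‖x‖ ^ m)) := mul_le_mul_of_nonneg_left h4 hL'.le
      _ = L' * (1 + N) * (1 + ‖x‖ ^ m) := by ring
  have ψmem : ∀ (v : H → ℝ) (Dv : H → K), Adm v Dv → MemCm m (ψF v Dv) := by
    rintro v Dv ⟨hvc, hDvc, N, hN0, hN⟩
    constructor
    · apply continuous_iff_seqContinuous.mpr
      intro xs x hxs
      exact hF₀cont xs (fun n => v (xs n)) (fun n => Dv (xs n)) x (v x) (Dv x) hxs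
        ((hvc.continuousAt.tendsto).comp hxs)
        (fun k => (((hDvc k).continuousAt.tendsto).comp hxs))
    · exact ⟨L' * (1 + N), ψbd v Dv N hN⟩
  -- the contraction estimate
  have contract : ∀ (v : H → ℝ) (Dv : H → K) (v' : H → ℝ) (Dv' : H → K),
      Adm v Dv → Adm v' Dv' → ∀ M : ℝ, 0 ≤ M →
      (∀ x, |v x - v' x| + ‖Dv x - Dv' x‖ ≤ M * (1 + ‖x‖ ^ m)) →
      ∀ x, |w (ψF v Dv) x - w (ψF v' Dv') x| + ‖Dw (ψF v Dv) x - Dw (ψF v' Dv') x‖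
        ≤ (1/2) * M * (1 + ‖x‖ ^ m) := by
    intro v Dv v' Dv' hA hA' M hM0 hMd x
    obtain ⟨N, hN0, hN⟩ := hA.2.2
    obtain ⟨N', hN0', hN'⟩ := hA'.2.2
    set φ := ψF v Dv
    set φ' := ψF v' Dv'
    have hφ : MemCm m φ := ψmem v Dv hA
    have hφ' : MemCm m φ' := ψmem v' Dv' hA'
    have hφb : ∀ y, |φ y| ≤ (L' * (1 + N)) * (1 + ‖y‖ ^ m) := ψbd v Dv N hN
    have hφb' : ∀ y, |φ' y| ≤ (L' * (1 + N')) * (1 + ‖y‖ ^ m) := ψbd v' Dv' N' hN'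
    set δ : H → ℝ := fun y => φ y - φ' y with hδdef
    have hδ : MemCm m δ := memCm_sub φ φ' hφ hφ'
    have hδb : ∀ y, |δ y| ≤ (L * M) * (1 + ‖y‖ ^ m) := by
      intro y
      have h1 := hF₀lip y (v y) (v' y) (Dv y) (Dv' y)
      have h2 := hMd y
      have h3 : L * (|v y - v' y| + ‖Dv y - Dv' y‖) ≤ L * (M * (1 + ‖y‖ ^ m)) :=
        mul_le_mul_of_nonneg_left h2 hL.le
      calc |δ y| ≤ L * (|v y - v' y| + ‖Dv y - Dv' y‖) := h1
        _ ≤ L * (M * (1 + ‖y‖ ^ m)) := h3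
        _ = (L * M) * (1 + ‖y‖ ^ m) := by ring
    have hw : w φ x - w φ' x = w δ x := by
      rw [hw]
      rw [← integral_sub (intw φ _ hφ hφb x).1 (intw φ' _ hφ' hφb' x).1]
      apply setIntegral_congr_fun measurableSet_Ioi
      intro s hs
      have := Pdiff φ φ' hφ hφ' s (le_of_lt hs) x
      simp only
      rw [← mul_sub, this]
    have hDw : Dw φ x - Dw φ' x = Dw δ x := by
      rw [hDw]
      rw [← integral_sub (intDw φ _ hφ hφb x).1 (intDw φ' _ hφ' hφb' x).1]
      apply setIntegral_congr_fun measurableSet_Ioi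
      intro s hs
      have := DPdiff φ φ' hφ hφ' s hs x
      simp only
      rw [← smul_sub, this]
    rw [hw, hDw]
    have hb1 := (wbd δ (L * M) hδ hδb x).1
    have hb2 := (wbd δ (L * M) hδ hδb x).2
    have hsum : J1 * (L * M * (1 + ‖x‖ ^ m)) + J2 * (L * M * (1 + ‖x‖ ^ m))
        = (L * I lam) * M * (1 + ‖x‖ ^ m) := by
      rw [← hJsum]; ring
    have hfin : (L * I lam) * M * (1 + ‖x‖ ^ m) ≤ (1/2) * M * (1 + ‖x‖ ^ m) := by
      have := mul_le_mul_of_nonneg_right (mul_le_mul_of_nonneg_right hκ hM0) (wt_pos m x).le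
      linarith
    linarith
  -- THE KEY LEMMA: w φ is G-Gateaux differentiable with gradient Dw φ
  have key : ∀ (φ : H → ℝ) (N : ℝ), MemCm m φ → (∀ y, |φ y| ≤ N * (1 + ‖y‖ ^ m)) →
      ∀ x : H, HasGGradientAt G (w φ) (Dw φ x) x := by
    intro φ N hφ hb x z
    set Gz : H := G.op x z with hGzdef
    have hGz : Gz ∈ G.ran := by rw [← G.range_eq x]; exact ⟨z, rfl⟩
    set q : ℝ → K := fun t => G.pinv (x + t • Gz) Gz with hq
    have qmem : ∀ t, q t ∈ G.dom := fun t => G.pinv_mem_dom _ Gz hGz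
    have hline : Continuous fun t : ℝ => x + t • Gz :=
      continuous_const.add (continuous_id.smul continuous_const)
    have qcont : Continuous q := (hG Gz hGz).comp hline
    have opq : ∀ t, G.op (x + t • Gz) ⟨q t, qmem t⟩ = Gz := fun t => G.pinv_apply _ Gz hGz
    -- derivative of t ↦ P s φ (x + t Gz)
    have hderiv : ∀ s : ℝ, 0 < s → ∀ t : ℝ,
        HasDerivAt (fun r => P s φ (x + r • Gz)) ⟪DP s φ (x + t • Gz), q t⟫ t := by
      intro s hs t
      apply tendsto_quot_hasDerivAt
      have hgat := (hPsmooth s hs φ hφ).2.1 (x + t • Gz) ⟨q t, qmem t⟩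
      rw [opq t] at hgat
      have harg : ∀ u : ℝ, x + t • Gz + u • Gz = x + (t + u) • Gz := by
        intro u; rw [add_smul]; abel
      simp only [harg] at hgat
      exact hgat
    -- continuity in t of the derivative
    have hdcont : ∀ s : ℝ, 0 < s → Continuous fun t => ⟪DP s φ (x + t • Gz), q t⟫ := by
      intro s hs
      have hwk : ∀ k : K, Continuous fun t => ⟪DP s φ (x + t • Gz), k⟫ :=
        fun k => ((hPsmooth s hs φ hφ).2.2.1 k).comp hline
      obtain ⟨CD, hCD⟩ := (hPsmooth s hs φ hφ).2.2.2
      rw [continuous_iff_continuousAt]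
      intro t₀
      have hsplit : (fun t => ⟪DP s φ (x + t • Gz), q t⟫)
          = fun t => ⟪DP s φ (x + t • Gz), q t - q t₀⟫ + ⟪DP s φ (x + t • Gz), q t₀⟫ := by
        funext t
        rw [inner_sub_right]
        ring
      have hg : Continuous fun t => CD * (1 + ‖x + t • Gz‖ ^ m) * ‖q t - q t₀‖ :=
        (continuous_const.mul (wtcont.comp hline)).mul
          ((qcont.sub continuous_const).norm)
      have hg0 : Tendsto (fun t => CD * (1 + ‖x + t • Gz‖ ^ m) * ‖q t - q t₀‖)
          (nhds t₀) (nhds 0) := by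
        have := hg.continuousAt (x := t₀)
        have h0 : CD * (1 + ‖x + t₀ • Gz‖ ^ m) * ‖q t₀ - q t₀‖ = 0 := by
          rw [sub_self, norm_zero, mul_zero]
        rw [ContinuousAt, h0] at this
        exact this
      have h1 : Tendsto (fun t => ⟪DP s φ (x + t • Gz), q t - q t₀⟫) (nhds t₀) (nhds 0) := by
        apply squeeze_zero_norm _ hg0
        intro t
        have hcs : ‖⟪DP s φ (x + t • Gz), q t - q t₀⟫‖ ≤ ‖DP s φ (x + t • Gz)‖ * ‖q t - q t₀‖ :=
          norm_inner_le_norm _ _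
        refine hcs.trans ?_
        exact mul_le_mul_of_nonneg_right (hCD _) (norm_nonneg _)
      have h2 : Tendsto (fun t => ⟪DP s φ (x + t • Gz), q t₀⟫) (nhds t₀)
          (nhds ⟪DP s φ (x + t₀ • Gz), q t₀⟫) := (hwk (q t₀)).continuousAt
      have h3 := h1.add h2
      rw [zero_add] at h3
      rw [ContinuousAt]
      rw [hsplit]
      convert h3 using 2
    -- uniform bound constants
    set W : ℝ := 1 + (‖x‖ + ‖Gz‖) ^ m with hWdef
    have hWb : ∀ t : ℝ, |t| ≤ 1 → 1 + ‖x + t • Gz‖ ^ m ≤ W := by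
      intro t ht
      have h1 : ‖x + t • Gz‖ ≤ ‖x‖ + ‖Gz‖ := by
        refine (norm_add_le _ _).trans ?_
        rw [norm_smul, Real.norm_eq_abs]
        nlinarith [norm_nonneg Gz, abs_nonneg t]
      have := Real.rpow_le_rpow (norm_nonneg _) h1 hm
      linarith
    obtain ⟨Q0, hQ0⟩ := (isCompact_Icc (a := (-1:ℝ)) (b := 1)).exists_bound_of_continuousOn
      qcont.continuousOn
    set Q : ℝ := max Q0 0 with hQdef
    have hQb : ∀ t : ℝ, |t| ≤ 1 → ‖q t‖ ≤ Q := by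
      intro t ht
      have := hQ0 t (abs_le.mp ht)
      exact this.trans (le_max_left _ _)
    have hQnn : 0 ≤ Q := le_max_right _ _
    have hWnn : 0 ≤ W := by
      have : (0:ℝ) ≤ (‖x‖ + ‖Gz‖) ^ m := Real.rpow_nonneg (by positivity) m
      linarith
    -- uniform bound on difference quotients
    have hquot : ∀ s : ℝ, 0 < s → ∀ u : ℝ, u ≠ 0 → |u| ≤ 1 →
        |u⁻¹ * (P s φ (x + u • Gz) - P s φ x)| ≤ γG s * Real.exp (aG * s) * N * (W * Q) := by
      intro s hs u hu hu1
      have hFTC := intervalIntegral.integral_eq_sub_of_hasDerivAt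
        (f := fun r => P s φ (x + r • Gz)) (f' := fun t => ⟪DP s φ (x + t • Gz), q t⟫)
        (fun t _ => hderiv s hs t) ((hdcont s hs).intervalIntegrable 0 u)
      simp only [zero_smul, add_zero] at hFTC
      have hbd : ∀ t ∈ Set.uIoc (0:ℝ) u, ‖⟪DP s φ (x + t • Gz), q t⟫‖
          ≤ γG s * Real.exp (aG * s) * N * (W * Q) := by
        intro t ht
        have htu : |t| ≤ 1 := by
          rcases le_or_gt 0 u with h | h
          · rw [Set.uIoc_of_le h] at ht
            rw [abs_le]
            constructor <;> nlinarith [ht.1, ht.2, abs_le.mp hu1]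
          · rw [Set.uIoc_of_ge h.le] at ht
            rw [abs_le]
            constructor <;> nlinarith [ht.1, ht.2, abs_le.mp hu1]
        have hDPt := DPb φ N hφ hb s hs (x + t • Gz)
        have hcs : ‖⟪DP s φ (x + t • Gz), q t⟫‖ ≤ ‖DP s φ (x + t • Gz)‖ * ‖q t‖ :=
          norm_inner_le_norm _ _
        refine hcs.trans ?_
        have hNnn : 0 ≤ N := bd_nonneg hb
        have hg : (0:ℝ) ≤ γG s * Real.exp (aG * s) * N :=
          mul_nonneg (mul_nonneg (hγGpos s) (Real.exp_nonneg _)) hNnn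
        calc ‖DP s φ (x + t • Gz)‖ * ‖q t‖
            ≤ (γG s * Real.exp (aG * s) * N * (1 + ‖x + t • Gz‖ ^ m)) * ‖q t‖ :=
              mul_le_mul_of_nonneg_right hDPt (norm_nonneg _)
          _ ≤ (γG s * Real.exp (aG * s) * N * W) * Q := by
              have h1 : γG s * Real.exp (aG * s) * N * (1 + ‖x + t • Gz‖ ^ m)
                  ≤ γG s * Real.exp (aG * s) * N * W :=
                mul_le_mul_of_nonneg_left (hWb t htu) hg
              exact mul_le_mul h1 (hQb t htu) (norm_nonneg _) (by positivity)
          _ = γG s * Real.exp (aG * s) * N * (W * Q) := by ring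
      have hnorm := intervalIntegral.norm_integral_le_of_norm_le_const hbd
      rw [hFTC] at hnorm
      rw [abs_mul, abs_inv]
      rw [Real.norm_eq_abs] at hnorm
      have hu0 : 0 < |u| := abs_pos.mpr hu
      rw [inv_mul_le_iff₀ hu0]
      refine hnorm.trans ?_
      rw [sub_zero, mul_comm]
    -- pass to the limit
    have htarget : ⟪Dw φ x, (z:K)⟫ = ∫ s in Ioi (0:ℝ), Real.exp (-lam*s) * ⟪DP s φ x, (z:K)⟫ :=
      Dwinner φ N hφ hb x z
    rw [htarget]
    have hrepr : ∀ u : ℝ, u⁻¹ * (w φ (x + u • Gz) - w φ x)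
        = ∫ s in Ioi (0:ℝ), Real.exp (-lam*s) * (u⁻¹ * (P s φ (x + u • Gz) - P s φ x)) := by
      intro u
      rw [hw]
      simp only
      rw [← integral_sub (intw φ N hφ hb (x + u • Gz)).1 (intw φ N hφ hb x).1]
      rw [← MeasureTheory.integral_const_mul]
      congr 1
      funext s
      ring
    have hgoal : Tendsto (fun u : ℝ => ∫ s in Ioi (0:ℝ),
        Real.exp (-lam*s) * (u⁻¹ * (P s φ (x + u • Gz) - P s φ x)))
        (nhdsWithin (0:ℝ) {0}ᶜ)
        (nhds (∫ s in Ioi (0:ℝ), Real.exp (-lam*s) * ⟪DP s φ x, (z:K)⟫)) := by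
      apply tendsto_integral_filter_of_dominated_convergence
        (fun s => γG s * Real.exp ((aG - lam) * s) * (N * (W * Q)))
      · apply Filter.Eventually.of_forall
        intro u
        exact ((Real.continuous_exp.comp (continuous_const.mul continuous_id)).aestronglyMeasurable).mul
          ((((measP φ hφ (x + u • Gz)).sub (measP φ hφ x))).const_mul u⁻¹)
      · have hev : ∀ᶠ u : ℝ in nhdsWithin (0:ℝ) {0}ᶜ, u ≠ 0 ∧ |u| ≤ 1 := by
          have h1 : ∀ᶠ u : ℝ in nhdsWithin (0:ℝ) {0}ᶜ, u ≠ 0 := self_mem_nhdsWithin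
          have h2 : ∀ᶠ u : ℝ in nhds (0:ℝ), |u| ≤ 1 := by
            have : Metric.closedBall (0:ℝ) 1 ∈ nhds (0:ℝ) :=
              Metric.closedBall_mem_nhds 0 one_pos
            filter_upwards [this] with u hu
            simpa [Real.dist_eq] using hu
          exact h1.and (h2.filter_mono nhdsWithin_le_nhds)
        filter_upwards [hev] with u hu
        filter_upwards [ae_restrict_mem measurableSet_Ioi] with s hs
        have h1 := hquot s hs u hu.1 hu.2
        rw [Real.norm_eq_abs, abs_mul, abs_of_nonneg (Real.exp_nonneg _)]
        have he : Real.exp (-lam*s) * (γG s * Real.exp (aG*s)) = γG s * Real.exp ((aG - lam) * s) := by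
          rw [mul_comm (γG s), mul_comm (γG s), ← mul_assoc, ← Real.exp_add]
          ring_nf
        calc Real.exp (-lam*s) * |u⁻¹ * (P s φ (x + u • Gz) - P s φ x)|
            ≤ Real.exp (-lam*s) * (γG s * Real.exp (aG*s) * N * (W * Q)) :=
              mul_le_mul_of_nonneg_left h1 (Real.exp_nonneg _)
          _ = γG s * Real.exp ((aG - lam) * s) * (N * (W * Q)) := by rw [← he]; ring
      · exact (intγ lam haG).mul_const (N * (W * Q))
      · filter_upwards [ae_restrict_mem measurableSet_Ioi] with s hs
        have hgat := (hPsmooth s hs φ hφ).2.1 x z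
        rw [← hGzdef] at hgat
        exact hgat.const_mul (Real.exp (-lam*s))
    have hfun : (fun u : ℝ => u⁻¹ * (w φ (x + u • Gz) - w φ x))
        = fun u : ℝ => ∫ s in Ioi (0:ℝ),
            Real.exp (-lam*s) * (u⁻¹ * (P s φ (x + u • Gz) - P s φ x)) := funext hrepr
    rw [hfun]
    exact hgoal
  -- one application of the map preserves admissibility, with explicit bound
  have step : ∀ (v : H → ℝ) (Dv : H → K), Adm v Dv → ∀ N : ℝ,
      (∀ x, |v x| + ‖Dv x‖ ≤ N * (1 + ‖x‖ ^ m)) →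
      Continuous (w (ψF v Dv)) ∧ (∀ k : K, Continuous fun x => ⟪Dw (ψF v Dv) x, k⟫) ∧
      ∀ x, |w (ψF v Dv) x| + ‖Dw (ψF v Dv) x‖ ≤ (I lam * (L' * (1 + N))) * (1 + ‖x‖ ^ m) := by
    intro v Dv hA N hN
    have hψm : MemCm m (ψF v Dv) := ψmem v Dv hA
    have hψb : ∀ y, |ψF v Dv y| ≤ (L' * (1 + N)) * (1 + ‖y‖ ^ m) := ψbd v Dv N hN
    refine ⟨wcont _ _ hψm hψb, Dwweak _ _ hψm hψb, fun x => ?_⟩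
    have h1 := (wbd _ _ hψm hψb x).1
    have h2 := (wbd _ _ hψm hψb x).2
    have : J1 * (L' * (1 + N) * (1 + ‖x‖ ^ m)) + J2 * (L' * (1 + N) * (1 + ‖x‖ ^ m))
        = (I lam * (L' * (1 + N))) * (1 + ‖x‖ ^ m) := by rw [← hJsum]; ring
    linarith
  have AdmΦ : ∀ (v : H → ℝ) (Dv : H → K), Adm v Dv → Adm (w (ψF v Dv)) (Dw (ψF v Dv)) := by
    intro v Dv hA
    obtain ⟨N, hN0, hN⟩ := hA.2.2
    obtain ⟨h1, h2, h3⟩ := step v Dv hA N hN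
    exact ⟨h1, h2, ⟨I lam * (L' * (1 + N)), mul_nonneg (I_nonneg lam) (by nlinarith), h3⟩⟩
  -- Picard iteration
  set Φ : ((H → ℝ) × (H → K)) → ((H → ℝ) × (H → K)) :=
    fun pr => (w (ψF pr.1 pr.2), Dw (ψF pr.1 pr.2)) with hΦ
  set p : ℕ → ((H → ℝ) × (H → K)) := fun n => Φ^[n] ((fun _ => 0), (fun _ => 0)) with hp
  have hpsucc : ∀ n, p (n+1) = Φ (p n) := fun n => Function.iterate_succ_apply' Φ n _
  have hp0 : p 0 = ((fun _ => (0:ℝ)), fun _ => (0:K)) := rfl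
  have hAdm0 : Adm (fun _ : H => (0:ℝ)) (fun _ : H => (0:K)) := by
    refine ⟨continuous_const, fun k => ?_, 0, le_refl 0, fun x => by simp⟩
    simp only [inner_zero_left]
    exact continuous_const
  have hAdmp : ∀ n, Adm (p n).1 (p n).2 := by
    intro n
    induction n with
    | zero => exact hAdm0
    | succ n ih =>
        rw [hpsucc n]
        exact AdmΦ _ _ ih
  set B : ℝ := I lam * L' with hB
  have hB0 : 0 ≤ B := mul_nonneg (I_nonneg lam) hL'.le
  have hd0 : ∀ x, |(p 1).1 x - (p 0).1 x| + ‖(p 1).2 x - (p 0).2 x‖ ≤ B * (1 + ‖x‖ ^ m) := by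
    intro x
    have h0b : ∀ x : H, |(fun _ : H => (0:ℝ)) x| + ‖(fun _ : H => (0:K)) x‖ ≤ 0 * (1 + ‖x‖ ^ m) := by
      intro x; simp
    have := (step _ _ hAdm0 0 h0b).2.2 x
    rw [hpsucc 0, hp0]
    simp only [hΦ]
    simp only [sub_zero]
    have heq : I lam * (L' * (1 + 0)) = B := by rw [hB]; ring
    rw [heq] at this
    exact this
  have hdn : ∀ n, ∀ x, |(p (n+1)).1 x - (p n).1 x| + ‖(p (n+1)).2 x - (p n).2 x‖
      ≤ B * (1/2)^n * (1 + ‖x‖ ^ m) := by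
    intro n
    induction n with
    | zero => intro x; simpa using hd0 x
    | succ n ih =>
        intro x
        have hM0 : (0:ℝ) ≤ B * (1/2)^n := by positivity
        have hc := contract (p (n+1)).1 (p (n+1)).2 (p n).1 (p n).2
          (hAdmp (n+1)) (hAdmp n) (B * (1/2)^n) hM0 ih x
        rw [hpsucc (n+1), hpsucc n]
        rw [hpsucc n] at hc
        have heq : (1:ℝ)/2 * (B * (1/2)^n) * (1 + ‖x‖ ^ m)
            = B * (1/2)^(n+1) * (1 + ‖x‖ ^ m) := by rw [pow_succ]; ring
        rw [← heq]
        exact hc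
  -- pointwise Cauchy sequences and limits
  have hcau1 : ∀ x, CauchySeq (fun n => (p n).1 x) := by
    intro x
    apply cauchySeq_of_le_geometric (1/2) (B * (1 + ‖x‖ ^ m)) (by norm_num)
    intro n
    rw [Real.dist_eq, abs_sub_comm]
    have := hdn n x
    have h2 : ‖(p (n+1)).2 x - (p n).2 x‖ ≥ 0 := norm_nonneg _
    nlinarith [wt_pos m x]
  have hcau2 : ∀ x, CauchySeq (fun n => (p n).2 x) := by
    intro x
    apply cauchySeq_of_le_geometric (1/2) (B * (1 + ‖x‖ ^ m)) (by norm_num)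
    intro n
    rw [dist_eq_norm, norm_sub_rev]
    have := hdn n x
    have h2 : |(p (n+1)).1 x - (p n).1 x| ≥ 0 := abs_nonneg _
    nlinarith [wt_pos m x]
  have hex1 : ∀ x, ∃ l : ℝ, Tendsto (fun n => (p n).1 x) atTop (nhds l) :=
    fun x => cauchySeq_tendsto_of_complete (hcau1 x)
  have hex2 : ∀ x, ∃ l : K, Tendsto (fun n => (p n).2 x) atTop (nhds l) :=
    fun x => cauchySeq_tendsto_of_complete (hcau2 x)
  choose v hv using hex1
  choose Dv hDv using hex2
  -- tail estimates
  have htail : ∀ n x, |(p n).1 x - v x| + ‖(p n).2 x - Dv x‖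
      ≤ 4 * B * (1/2)^n * (1 + ‖x‖ ^ m) := by
    intro n x
    have ht1 : dist ((p n).1 x) (v x) ≤ (B * (1 + ‖x‖ ^ m)) * (1/2)^n / (1 - 1/2) := by
      apply dist_le_of_le_geometric_of_tendsto (1/2) (B * (1 + ‖x‖ ^ m)) (by norm_num)
        _ (hv x) n
      intro k
      rw [Real.dist_eq, abs_sub_comm]
      have := hdn k x
      have h2 : ‖(p (k+1)).2 x - (p k).2 x‖ ≥ 0 := norm_nonneg _
      nlinarith [wt_pos m x]
    have ht2 : dist ((p n).2 x) (Dv x) ≤ (B * (1 + ‖x‖ ^ m)) * (1/2)^n / (1 - 1/2) := by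
      apply dist_le_of_le_geometric_of_tendsto (1/2) (B * (1 + ‖x‖ ^ m)) (by norm_num)
        _ (hDv x) n
      intro k
      rw [dist_eq_norm, norm_sub_rev]
      have := hdn k x
      have h2 : |(p (k+1)).1 x - (p k).1 x| ≥ 0 := abs_nonneg _
      nlinarith [wt_pos m x]
    rw [Real.dist_eq] at ht1
    rw [dist_eq_norm] at ht2
    have he : (B * (1 + ‖x‖ ^ m)) * (1/2)^n / (1 - 1/2) = 2 * B * (1/2)^n * (1 + ‖x‖ ^ m) := by
      ring
    rw [he] at ht1 ht2
    nlinarith [ht1, ht2]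
  -- the limit pair is admissible
  have hballW : ∀ x₀ : H, ∀ y ∈ Metric.ball x₀ 1, 1 + ‖y‖ ^ m ≤ 1 + (‖x₀‖ + 1) ^ m := by
    intro x₀ y hy
    have h1 : ‖y - x₀‖ < 1 := mem_ball_iff_norm.mp hy
    have h2 : ‖y‖ ≤ ‖x₀‖ + 1 := by
      have := norm_sub_norm_le y x₀
      linarith
    have := Real.rpow_le_rpow (norm_nonneg y) h2 hm
    linarith
  have hW₀pos : ∀ x₀ : H, (0:ℝ) < 1 + (‖x₀‖ + 1) ^ m := by
    intro x₀
    have : (0:ℝ) ≤ (‖x₀‖ + 1) ^ m := Real.rpow_nonneg (by positivity) m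
    linarith
  have hvDb : ∀ x, |v x| + ‖Dv x‖ ≤ (4*B) * (1 + ‖x‖ ^ m) := by
    intro x
    have := htail 0 x
    rw [hp0] at this
    simp only [pow_zero, mul_one] at this
    have e1 : |(fun _ : H => (0:ℝ)) x - v x| = |v x| := by simp
    have e2 : ‖(fun _ : H => (0:K)) x - Dv x‖ = ‖Dv x‖ := by simp
    rw [e1, e2] at this
    linarith
  have hvAdm : Adm v Dv := by
    refine ⟨?_, ?_, 4*B, by positivity, hvDb⟩
    · rw [continuous_iff_continuousAt]
      intro x₀
      refine ContinuousOn.continuousAt ?_ (Metric.ball_mem_nhds x₀ one_pos)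
      apply TendstoUniformlyOn.continuousOn (F := fun n y => (p n).1 y) (f := v) (p := (atTop : Filter ℕ))
      · rw [Metric.tendstoUniformlyOn_iff]
        intro ε hε
        have hlim : Tendsto (fun n : ℕ => 4*B*(1 + (‖x₀‖ + 1) ^ m)*(1/2)^n) atTop (nhds 0) := by
          have h := (tendsto_pow_atTop_nhds_zero_of_lt_one (by norm_num : (0:ℝ) ≤ 1/2)
            (by norm_num : (1:ℝ)/2 < 1)).const_mul (4*B*(1 + (‖x₀‖ + 1) ^ m))
          rw [mul_zero] at h
          exact h
        filter_upwards [hlim.eventually (eventually_lt_nhds hε)] with n hn y hy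
        rw [Real.dist_eq, abs_sub_comm]
        have ht := htail n y
        have hmn : 4*B*(1/2)^n * (1 + ‖y‖ ^ m) ≤ 4*B*(1/2)^n * (1 + (‖x₀‖ + 1) ^ m) :=
          mul_le_mul_of_nonneg_left (hballW x₀ y hy) (by positivity)
        have hnn : (0:ℝ) ≤ ‖(p n).2 y - Dv y‖ := norm_nonneg _
        calc |(p n).1 y - v y| ≤ 4*B*(1/2)^n * (1 + ‖y‖ ^ m) := by linarith
          _ ≤ 4*B*(1/2)^n * (1 + (‖x₀‖ + 1) ^ m) := hmn
          _ = 4*B*(1 + (‖x₀‖ + 1) ^ m)*(1/2)^n := by ring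
          _ < ε := hn
      · exact (Filter.Eventually.of_forall (fun n => ((hAdmp n).1).continuousOn)).frequently
    · intro k
      rw [continuous_iff_continuousAt]
      intro x₀
      refine ContinuousOn.continuousAt ?_ (Metric.ball_mem_nhds x₀ one_pos)
      apply TendstoUniformlyOn.continuousOn
        (F := fun n y => ⟪(p n).2 y, k⟫) (f := fun y => ⟪Dv y, k⟫) (p := (atTop : Filter ℕ))
      · rw [Metric.tendstoUniformlyOn_iff]
        intro ε hε
        have hlim : Tendsto (fun n : ℕ => 4*B*(1 + (‖x₀‖ + 1) ^ m)*(‖k‖+1)*(1/2)^n)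
            atTop (nhds 0) := by
          have h := (tendsto_pow_atTop_nhds_zero_of_lt_one (by norm_num : (0:ℝ) ≤ 1/2)
            (by norm_num : (1:ℝ)/2 < 1)).const_mul (4*B*(1 + (‖x₀‖ + 1) ^ m)*(‖k‖+1))
          rw [mul_zero] at h
          exact h
        filter_upwards [hlim.eventually (eventually_lt_nhds hε)] with n hn y hy
        rw [Real.dist_eq]
        have hin : ⟪Dv y, k⟫ - ⟪(p n).2 y, k⟫ = ⟪Dv y - (p n).2 y, k⟫ := by
          rw [inner_sub_left]
        rw [hin]
        have hcs : |⟪Dv y - (p n).2 y, k⟫| ≤ ‖Dv y - (p n).2 y‖ * ‖k‖ := abs_real_inner_le_norm _ _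
        have ht := htail n y
        have h1 : ‖Dv y - (p n).2 y‖ = ‖(p n).2 y - Dv y‖ := norm_sub_rev _ _
        have hnn : (0:ℝ) ≤ |(p n).1 y - v y| := abs_nonneg _
        have h2 : ‖(p n).2 y - Dv y‖ ≤ 4*B*(1/2)^n * (1 + ‖y‖ ^ m) := by linarith
        have h3 : ‖Dv y - (p n).2 y‖ * ‖k‖ ≤ (4*B*(1/2)^n * (1 + (‖x₀‖ + 1) ^ m)) * (‖k‖+1) := by
          rw [h1]
          have hle : ‖(p n).2 y - Dv y‖ ≤ 4*B*(1/2)^n * (1 + (‖x₀‖ + 1) ^ m) :=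
            h2.trans (mul_le_mul_of_nonneg_left (hballW x₀ y hy) (by positivity))
          apply mul_le_mul hle (by linarith [norm_nonneg k]) (norm_nonneg k)
          positivity
        calc |⟪Dv y - (p n).2 y, k⟫| ≤ ‖Dv y - (p n).2 y‖ * ‖k‖ := hcs
          _ ≤ (4*B*(1/2)^n * (1 + (‖x₀‖ + 1) ^ m)) * (‖k‖+1) := h3
          _ = 4*B*(1 + (‖x₀‖ + 1) ^ m)*(‖k‖+1)*(1/2)^n := by ring
          _ < ε := hn
      · exact (Filter.Eventually.of_forall (fun n => ((hAdmp n).2.1 k).continuousOn)).frequently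
  -- the limit is a fixed point
  have hfix : ∀ x, v x = w (ψF v Dv) x ∧ Dv x = Dw (ψF v Dv) x := by
    intro x
    have hseq1 : Tendsto (fun n => (p (n+1)).1 x) atTop (nhds (v x)) :=
      (hv x).comp (tendsto_add_atTop_nat 1)
    have hseq2 : Tendsto (fun n => (p (n+1)).2 x) atTop (nhds (Dv x)) :=
      (hDv x).comp (tendsto_add_atTop_nat 1)
    have hbnd : ∀ n, |(p (n+1)).1 x - w (ψF v Dv) x| + ‖(p (n+1)).2 x - Dw (ψF v Dv) x‖
        ≤ (1/2)*(4*B*(1/2)^n)*(1 + ‖x‖ ^ m) := by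
      intro n
      have hc := contract (p n).1 (p n).2 v Dv (hAdmp n) hvAdm (4*B*(1/2)^n) (by positivity)
        (fun y => by
          have := htail n y
          have heq : 4*B*(1/2)^n*(1 + ‖y‖ ^ m) = 4 * B * (1 / 2) ^ n * (1 + ‖y‖ ^ m) := by ring
          linarith) x
      rw [hpsucc n]
      exact hc
    have hlim0 : Tendsto (fun n : ℕ => (1/2)*(4*B*(1/2)^n)*(1 + ‖x‖ ^ m)) atTop (nhds 0) := by
      have h := (tendsto_pow_atTop_nhds_zero_of_lt_one (by norm_num : (0:ℝ) ≤ 1/2)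
        (by norm_num : (1:ℝ)/2 < 1)).const_mul (2*B*(1 + ‖x‖ ^ m))
      rw [mul_zero] at h
      refine h.congr (fun n => by ring)
    have h1 : Tendsto (fun n => (p (n+1)).1 x) atTop (nhds (w (ψF v Dv) x)) := by
      rw [tendsto_iff_dist_tendsto_zero]
      apply squeeze_zero (fun n => dist_nonneg) _ hlim0
      intro n
      rw [Real.dist_eq]
      have := hbnd n
      have hnn : (0:ℝ) ≤ ‖(p (n+1)).2 x - Dw (ψF v Dv) x‖ := norm_nonneg _
      linarith
    have h2 : Tendsto (fun n => (p (n+1)).2 x) atTop (nhds (Dw (ψF v Dv) x)) := by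
      rw [tendsto_iff_dist_tendsto_zero]
      apply squeeze_zero (fun n => dist_nonneg) _ hlim0
      intro n
      rw [dist_eq_norm]
      have := hbnd n
      have hnn : (0:ℝ) ≤ |(p (n+1)).1 x - w (ψF v Dv) x| := abs_nonneg _
      linarith
    exact ⟨tendsto_nhds_unique hseq1 h1, tendsto_nhds_unique hseq2 h2⟩
  have hveq : v = w (ψF v Dv) := funext fun x => (hfix x).1
  have hDveq : Dv = Dw (ψF v Dv) := funext fun x => (hfix x).2
  -- data for the solution
  have hψmv : MemCm m (ψF v Dv) := ψmem v Dv hvAdm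
  have hψbv : ∀ y, |ψF v Dv y| ≤ (L' * (1 + 4*B)) * (1 + ‖y‖ ^ m) := ψbd v Dv (4*B) hvDb
  refine ⟨v, Dv, ⟨⟨?_, ?_, hvAdm.2.1, ⟨4*B, fun x => by
    have := hvDb x; have := abs_nonneg (v x); linarith⟩⟩, ?_⟩, ?_⟩
  · -- v ∈ C_m
    exact ⟨hvAdm.1, ⟨4*B, fun x => by
      have := hvDb x; have := norm_nonneg (Dv x); linarith⟩⟩
  · -- gradient
    intro x
    have hk := key (ψF v Dv) (L' * (1 + 4*B)) hψmv hψbv x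
    rw [← hveq] at hk
    rw [← (hfix x).2] at hk
    exact hk
  · -- integral equation
    intro x
    rw [MeasureTheory.integral_Ici_eq_integral_Ioi]
    conv_lhs => rw [hveq]
  · -- uniqueness
    rintro v' Dv' ⟨hmem', heq'⟩
    obtain ⟨⟨hv'c, Cv, hCv⟩, hgrad', hDv'c, CD, hCD⟩ := hmem'
    have hvb' : ∀ x, |v' x| + ‖Dv' x‖ ≤ (Cv + CD) * (1 + ‖x‖ ^ m) := by
      intro x
      have := hCv x; have := hCD x
      have := wt_pos m x
      nlinarith
    have hCvCD : 0 ≤ Cv + CD := by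
      have h0 := hvb' 0
      nlinarith [abs_nonneg (v' 0), norm_nonneg (Dv' 0), wt_pos m (0:H)]
    have hAdm' : Adm v' Dv' := ⟨hv'c, hDv'c, Cv + CD, hCvCD, hvb'⟩
    have hψm' : MemCm m (ψF v' Dv') := ψmem v' Dv' hAdm'
    have hψb' : ∀ y, |ψF v' Dv' y| ≤ (L' * (1 + (Cv + CD))) * (1 + ‖y‖ ^ m) :=
      ψbd v' Dv' (Cv + CD) hvb'
    have hv'w : v' = w (ψF v' Dv') := by
      funext x
      rw [heq' x, MeasureTheory.integral_Ici_eq_integral_Ioi, hw]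
    have hDv'w : Dv' = Dw (ψF v' Dv') := by
      funext x
      have hk := key (ψF v' Dv') (L' * (1 + (Cv + CD))) hψm' hψb' x
      rw [← hv'w] at hk
      exact gGrad_unique (hgrad' x) hk
    -- contraction iteration on the two fixed points
    set M : ℝ := (Cv + CD) + 4*B with hM
    have hM0 : 0 ≤ M := by positivity
    have hMd : ∀ x, |v' x - v x| + ‖Dv' x - Dv x‖ ≤ M * (1 + ‖x‖ ^ m) := by
      intro x
      have h1 := hvb' x
      have h2 := hvDb x
      have h3 : |v' x - v x| ≤ |v' x| + |v x| := abs_sub _ _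
      have h4 : ‖Dv' x - Dv x‖ ≤ ‖Dv' x‖ + ‖Dv x‖ := norm_sub_le _ _
      rw [hM]
      nlinarith
    have hiter : ∀ n : ℕ, ∀ x, |v' x - v x| + ‖Dv' x - Dv x‖ ≤ (1/2)^n * M * (1 + ‖x‖ ^ m) := by
      intro n
      induction n with
      | zero => intro x; simpa using hMd x
      | succ n ih =>
          intro x
          have hc := contract v' Dv' v Dv hAdm' hvAdm ((1/2)^n * M)
            (by positivity) (fun y => by
              have := ih y
              have heq : (1/2)^n * M * (1 + ‖y‖ ^ m) = (1 / 2) ^ n * M * (1 + ‖y‖ ^ m) := by ring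
              linarith) x
          rw [← hv'w, ← hDv'w, ← hveq, ← hDveq] at hc
          have heq : (1:ℝ)/2 * ((1/2)^n * M) * (1 + ‖x‖ ^ m)
              = (1/2)^(n+1) * M * (1 + ‖x‖ ^ m) := by rw [pow_succ]; ring
          rw [heq] at hc
          exact hc
    funext x
    have hlim0 : Tendsto (fun n : ℕ => (1/2)^n * M * (1 + ‖x‖ ^ m)) atTop (nhds 0) := by
      have h := (tendsto_pow_atTop_nhds_zero_of_lt_one (by norm_num : (0:ℝ) ≤ 1/2)
        (by norm_num : (1:ℝ)/2 < 1)).mul_const (M * (1 + ‖x‖ ^ m))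
      rw [zero_mul] at h
      refine h.congr (fun n => by ring)
    have hle : |v' x - v x| ≤ 0 := by
      refine ge_of_tendsto hlim0 (Filter.Eventually.of_forall (fun n => ?_))
      have := hiter n x
      have hnn : (0:ℝ) ≤ ‖Dv' x - Dv x‖ := norm_nonneg _
      linarith
    have : |v' x - v x| = 0 := le_antisymm hle (abs_nonneg _)
    have := abs_eq_zero.mp this
    linarith [this]
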